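/- Let p be a prime, d ∈ ℕ, α > 1/2, let γ = (γ_u) be weights with 0 < γ_u ≤ 1, and let λ ∈ [1/2, α). Then the average over all generating vectors satisfies (1/(p−1)^d) Σ_{z∈{1,…,p−1}^d} E(p,z)^{1/λ} ≤ (2/(p−1)) · V_d(α/λ, γ^{1/λ}). -/

import Mathlib

open scoped BigOperators Classical

noncomputable section

/-- Real Riemann zeta value `ζ(β) = Σ_{k≥1} k^{-β}` (for `β > 1`). -/
def zetaR (β : ℝ) : ℝ := ∑' k : ℕ, ((k + 1 : ℝ)) ^ (-β)

/-- Support of a frequency vector. -/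
def suppF {d : ℕ} (h : Fin d → ℤ) : Finset (Fin d) := Finset.univ.filter (fun j => h j ≠ 0)

/-- The Korobov weight function `r_{d,α,γ}`. -/
def rKor (d : ℕ) (α : ℝ) (γ : Finset (Fin d) → ℝ) (h : Fin d → ℤ) : ℝ :=
  if h = 0 then 1 else (γ (suppF h))⁻¹ * ∏ j ∈ suppF h, |(h j : ℝ)| ^ α

/-- `V_d(β, γ) = Σ_{∅ ≠ u ⊆ {1,…,d}} γ_u (2ζ(β))^{|u|}`. -/
def Vd (d : ℕ) (β : ℝ) (γ : Finset (Fin d) → ℝ) : ℝ :=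
  ∑ u ∈ Finset.univ.filter (fun u : Finset (Fin d) => u.Nonempty), γ u * (2 * zetaR β) ^ u.card

/-- The set of generating vectors `{1,…,p-1}^d`. -/
def genSet (d p : ℕ) : Finset (Fin d → ℤ) :=
  Fintype.piFinset (fun _ => Finset.Icc (1 : ℤ) ((p : ℤ) - 1))

/-- Nonzero dual lattice points: `h ≠ 0` with `h·z ≡ 0 (mod p)`. -/
def dualLat (d p : ℕ) (z : Fin d → ℤ) : Set (Fin d → ℤ) :=
  {h | h ≠ 0 ∧ (p : ℤ) ∣ ∑ j, h j * z j}

/-- Worst-case error of the lattice rule `Q_p^z` on the Korobov class. -/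
def Edet (d : ℕ) (α : ℝ) (γ : Finset (Fin d) → ℝ) (p : ℕ) (z : Fin d → ℤ) : ℝ :=
  Real.sqrt (∑' h : dualLat d p z, ((rKor d α γ h.1) ^ 2)⁻¹)

/-- Quadrature error of the lattice rule `Q_p^z` on the function with
Fourier coefficients `a`. -/
def err (d p : ℕ) (z : Fin d → ℤ) (a : (Fin d → ℤ) → ℂ) : ℂ :=
  ∑' h : dualLat d p z, a h.1

/-- The Korobov norm of the coefficient sequence `a`. -/
def korNorm (d : ℕ) (α : ℝ) (γ : Finset (Fin d) → ℝ) (a : (Fin d → ℤ) → ℂ) : ℝ :=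
  Real.sqrt (∑' h : Fin d → ℤ, (rKor d α γ h) ^ 2 * ‖a h‖ ^ 2)

/-- Membership of the coefficient sequence in the Korobov class (`‖a‖ < ∞`). -/
def korSummable (d : ℕ) (α : ℝ) (γ : Finset (Fin d) → ℝ) (a : (Fin d → ℤ) → ℂ) : Prop :=
  Summable (fun h : Fin d → ℤ => (rKor d α γ h) ^ 2 * ‖a h‖ ^ 2)

/-- The median (the `(N+1)/2`-th smallest value for odd `N`). -/
def medianR {N : ℕ} (f : Fin N → ℝ) : ℝ :=
  (List.insertionSort (· ≤ ·) (List.ofFn f)).getD ((N - 1) / 2) 0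

/-- The median of complex numbers: medians of real and imaginary parts. -/
def medianC {N : ℕ} (f : Fin N → ℂ) : ℂ :=
  (medianR fun k => (f k).re) + (medianR fun k => (f k).im) * Complex.I

/-- The set `P_n` of primes `p` with `⌈n/2⌉ + 1 ≤ p ≤ n`. -/
def Pset (n : ℕ) : Finset ℕ := (Finset.Icc ((n + 1) / 2 + 1) n).filter Nat.Prime

/-- The sample space of a single draw: pairs `(p, z)` with `p ∈ P_n`,
`z ∈ {1,…,p-1}^d`. -/
def allPairs (n d : ℕ) : Finset ((_ : ℕ) × (Fin d → ℤ)) :=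
  (Pset n).sigma (fun p => genSet d p)

/-- The probability of one pair `(p,z)`: `p` uniform on `P_n`, and given `p`,
`z` uniform on `{1,…,p-1}^d`. -/
def pairWeight (n d : ℕ) (pz : (_ : ℕ) × (Fin d → ℤ)) : ℝ :=
  (((Pset n).card : ℝ))⁻¹ * (((pz.1 : ℝ) - 1) ^ d)⁻¹

/-- Number of repetitions used by the median algorithm `M_n`. -/
def numReps (h : ℕ → ℝ) (n : ℕ) : ℕ := 2 * ⌈h n * Real.logb 2 n⌉₊ + 1

/-- Expectation, over the `N` independent draws of the median algorithm,
of a function `g` of the draws. -/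
def expDraws (n d N : ℕ) (g : (Fin N → (_ : ℕ) × (Fin d → ℤ)) → ℝ) : ℝ :=
  ∑ ω ∈ Fintype.piFinset (fun _ : Fin N => allPairs n d),
    (∏ k, pairWeight n d (ω k)) * g ω

/-- Product weights `γ_u = ∏_{j ∈ u} γ_j`. -/
def prodW (d : ℕ) (γ : ℕ → ℝ) : Finset (Fin d) → ℝ := fun u => ∏ j ∈ u, γ (j : ℕ)

-- basic facts
open scoped ENNReal NNReal

lemma mem_suppF {d : ℕ} {h : Fin d → ℤ} {j : Fin d} : j ∈ suppF h ↔ h j ≠ 0 := by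
  simp [suppF]

lemma suppF_eq_empty {d : ℕ} {h : Fin d → ℤ} : suppF h = ∅ ↔ h = 0 := by
  simp only [Finset.eq_empty_iff_forall_notMem, mem_suppF, not_not, funext_iff]
  rfl

lemma aux_zeta_summable {b : ℝ} (hb : 1 < b) : Summable (fun k : ℕ => ((k : ℝ) + 1) ^ (-b)) := by
  have h1 : Summable (fun n : ℕ => (n : ℝ) ^ (-b)) := Real.summable_nat_rpow.2 (by linarith)
  have h2 := h1.comp_injective (add_left_injective 1)
  refine h2.congr fun n => ?_
  simp [Function.comp]

lemma zetaR_nonneg {b : ℝ} : 0 ≤ zetaR b :=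
  tsum_nonneg fun k => Real.rpow_nonneg (by positivity) _

set_option maxHeartbeats 1000000 in
lemma aux_int_sum {b : ℝ} (hb : 1 < b) :
    ∑' k : ℤ, (if k = 0 then 0 else ENNReal.ofReal (|(k : ℝ)| ^ (-b)))
      = ENNReal.ofReal (2 * zetaR b) := by
  set f : ℤ → ℝ≥0∞ := fun k => if k = 0 then 0 else ENNReal.ofReal (|(k : ℝ)| ^ (-b)) with hf
  have hsum : ∀ n : ℕ, f ((n : ℤ) + 1) = ENNReal.ofReal (((n : ℝ) + 1) ^ (-b)) := by
    intro n
    have h1 : ((n : ℤ) + 1) ≠ 0 := by omega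
    have h2 : ((((n : ℤ) + 1 : ℤ)) : ℝ) = (n : ℝ) + 1 := by push_cast; ring
    have h3 : |(n : ℝ) + 1| = (n : ℝ) + 1 := abs_of_pos (by positivity)
    simp only [hf, if_neg h1, h2, h3]
  have hsum2 : ∀ n : ℕ, f (-((n : ℤ) + 1)) = ENNReal.ofReal (((n : ℝ) + 1) ^ (-b)) := by
    intro n
    have h1 : (-((n : ℤ) + 1)) ≠ 0 := by omega
    have h2 : (((-((n : ℤ) + 1) : ℤ)) : ℝ) = -((n : ℝ) + 1) := by push_cast; ring
    have h3 : |(-((n : ℝ) + 1))| = (n : ℝ) + 1 := by rw [abs_neg]; exact abs_of_pos (by positivity)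
    simp only [hf, if_neg h1, h2, h3]
  have key := tsum_nat_add_neg_add_one (f := f) ENNReal.summable
  rw [← key, ENNReal.tsum_add]
  have e1 : ∑' n : ℕ, f (n : ℤ) = ENNReal.ofReal (zetaR b) := by
    rw [tsum_eq_zero_add' ENNReal.summable]
    have e0 : f ((0 : ℕ) : ℤ) = 0 := by simp [hf]
    rw [e0, zero_add]
    have : ∀ n : ℕ, f ((n + 1 : ℕ) : ℤ) = ENNReal.ofReal (((n : ℝ) + 1) ^ (-b)) := by
      intro n
      have : ((n + 1 : ℕ) : ℤ) = (n : ℤ) + 1 := by push_cast; ring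
      rw [this, hsum n]
    rw [tsum_congr this]
    rw [← ENNReal.ofReal_tsum_of_nonneg (fun n => Real.rpow_nonneg (by positivity) _)
      (aux_zeta_summable hb), zetaR]
  have e2 : ∑' n : ℕ, f (-((n : ℤ) + 1)) = ENNReal.ofReal (zetaR b) := by
    rw [tsum_congr hsum2]
    rw [← ENNReal.ofReal_tsum_of_nonneg (fun n => Real.rpow_nonneg (by positivity) _)
      (aux_zeta_summable hb), zetaR]
  rw [e1, e2, two_mul, ENNReal.ofReal_add zetaR_nonneg zetaR_nonneg]

lemma aux_two_rpow {q : ℝ} (hq : 1 ≤ q) (a c : ℝ≥0∞) : a ^ q + c ^ q ≤ (a + c) ^ q := by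
  have h := ENNReal.rpow_add_rpow_le_add a c hq
  have hq0 : 0 < q := lt_of_lt_of_le one_pos hq
  have h2 := ENNReal.rpow_le_rpow h hq0.le
  rwa [← ENNReal.rpow_mul, one_div_mul_cancel hq0.ne', ENNReal.rpow_one] at h2

lemma aux_finset_sum_rpow {ι : Type*} {q : ℝ} (hq : 1 ≤ q) (s : Finset ι) (f : ι → ℝ≥0∞) :
    ∑ i ∈ s, f i ^ q ≤ (∑ i ∈ s, f i) ^ q := by
  classical
  induction s using Finset.cons_induction with
  | empty => simp
  | cons a s ha ih =>
      rw [Finset.sum_cons, Finset.sum_cons]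
      calc f a ^ q + ∑ i ∈ s, f i ^ q ≤ f a ^ q + (∑ i ∈ s, f i) ^ q :=
            add_le_add_right ih _
        _ ≤ (f a + ∑ i ∈ s, f i) ^ q := aux_two_rpow hq _ _

lemma aux_tsum_rpow {ι : Type*} (f : ι → ℝ≥0∞) {θ : ℝ} (h0 : 0 < θ) (h1 : θ ≤ 1) :
    (∑' i, f i) ^ θ ≤ ∑' i, f i ^ θ := by
  have hq : 1 ≤ 1 / θ := by rw [le_div_iff₀ h0]; linarith
  have key : ∑' i, f i ≤ (∑' i, f i ^ θ) ^ (1 / θ) := by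
    rw [ENNReal.tsum_eq_iSup_sum]
    refine iSup_le fun s => ?_
    have e1 : ∑ i ∈ s, f i = ∑ i ∈ s, (f i ^ θ) ^ (1 / θ) := by
      refine Finset.sum_congr rfl fun i _ => ?_
      rw [← ENNReal.rpow_mul, mul_one_div_cancel h0.ne', ENNReal.rpow_one]
    rw [e1]
    calc ∑ i ∈ s, (f i ^ θ) ^ (1 / θ) ≤ (∑ i ∈ s, f i ^ θ) ^ (1 / θ) :=
          aux_finset_sum_rpow hq s _
      _ ≤ (∑' i, f i ^ θ) ^ (1 / θ) := by
          exact ENNReal.rpow_le_rpow (ENNReal.sum_le_tsum s) (by positivity)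
  calc (∑' i, f i) ^ θ ≤ ((∑' i, f i ^ θ) ^ (1 / θ)) ^ θ := ENNReal.rpow_le_rpow key h0.le
    _ = ∑' i, f i ^ θ := by
        rw [← ENNReal.rpow_mul, one_div_mul_cancel h0.ne', ENNReal.rpow_one]

lemma aux_tsum_pi : ∀ (d : ℕ) (g : Fin d → ℤ → ℝ≥0∞),
    ∑' h : Fin d → ℤ, ∏ j, g j (h j) = ∏ j, ∑' k : ℤ, g j k := by
  intro d
  induction d with
  | zero =>
      intro g
      have : ∀ h : Fin 0 → ℤ, ∏ j, g j (h j) = 1 := fun h => by simp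
      rw [tsum_congr this]
      haveI : Unique (Fin 0 → ℤ) := ⟨⟨fun j => j.elim0⟩, fun h => funext fun j => j.elim0⟩
      rw [tsum_eq_single default (fun b hb => absurd (Subsingleton.elim b default) hb)]
      simp
  | succ n ih =>
      intro g
      have he := (Fin.consEquiv (fun _ : Fin (n + 1) => ℤ)).tsum_eq
        (f := fun h : Fin (n + 1) → ℤ => ∏ j, g j (h j))
      rw [← he]
      have e2 : ∀ x : ℤ × (Fin n → ℤ),
          (∏ j, g j ((Fin.consEquiv (fun _ : Fin (n+1) => ℤ)) x j)) =
            g 0 x.1 * ∏ j : Fin n, g j.succ (x.2 j) := by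
        rintro ⟨k, h'⟩
        rw [Fin.prod_univ_succ]
        simp [Fin.consEquiv]
      calc ∑' x : ℤ × (Fin n → ℤ), ∏ j, g j ((Fin.consEquiv (fun _ : Fin (n+1) => ℤ)) x j)
          = ∑' (k : ℤ) (h' : Fin n → ℤ), g 0 k * ∏ j : Fin n, g j.succ (h' j) := by
            rw [← ENNReal.tsum_prod]; exact tsum_congr e2
        _ = (∑' k : ℤ, g 0 k) * ∑' h' : Fin n → ℤ, ∏ j : Fin n, g j.succ (h' j) := by
            rw [← ENNReal.tsum_mul_right]
            refine tsum_congr fun k => ?_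
            rw [ENNReal.tsum_mul_left]
        _ = ∏ j, ∑' k : ℤ, g j k := by
            rw [ih (fun j => g j.succ), Fin.prod_univ_succ]

def Fe (d : ℕ) (b : ℝ) (w : Finset (Fin d) → ℝ) (h : Fin d → ℤ) : ℝ≥0∞ :=
  if h = 0 then 0
  else ENNReal.ofReal (w (suppF h)) * ∏ j ∈ suppF h, ENNReal.ofReal (|(h j : ℝ)| ^ (-b))

lemma Fe_tsum (d : ℕ) {b : ℝ} (hb : 1 < b) (w : Finset (Fin d) → ℝ) :
    ∑' h : Fin d → ℤ, Fe d b w h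
      = ∑ u ∈ Finset.univ.filter (fun u : Finset (Fin d) => u.Nonempty),
          ENNReal.ofReal (w u) * ENNReal.ofReal (2 * zetaR b) ^ u.card := by
  classical
  set F := Finset.univ.filter (fun u : Finset (Fin d) => u.Nonempty) with hF
  set f : ℤ → ℝ≥0∞ := fun k => ENNReal.ofReal (|(k : ℝ)| ^ (-b)) with hfdef
  set g : Finset (Fin d) → Fin d → ℤ → ℝ≥0∞ := fun u j k =>
    if j ∈ u then (if k = 0 then 0 else f k) else (if k = 0 then 1 else 0) with hgdef
  -- pointwise decomposition
  have point : ∀ h : Fin d → ℤ, Fe d b w h =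
      ∑ u ∈ F, ENNReal.ofReal (w u) * ∏ j, g u j (h j) := by
    intro h
    have prodeq : ∀ u ∈ F, (∏ j, g u j (h j)) =
        if suppF h = u then ∏ j ∈ u, f (h j) else 0 := by
      intro u _
      by_cases hs : suppF h = u
      · rw [if_pos hs, ← Finset.prod_mul_prod_compl u (fun j => g u j (h j))]
        have e1 : ∏ j ∈ u, g u j (h j) = ∏ j ∈ u, f (h j) := by
          refine Finset.prod_congr rfl fun j hj => ?_
          have : h j ≠ 0 := mem_suppF.1 (hs ▸ hj)
          simp [hgdef, hj, this]
        have e2 : ∏ j ∈ uᶜ, g u j (h j) = 1 := by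
          refine Finset.prod_eq_one fun j hj => ?_
          have hju : j ∉ u := Finset.mem_compl.1 hj
          have : h j = 0 := by
            by_contra hc
            exact hju (hs ▸ mem_suppF.2 hc)
          simp [hgdef, hju, this]
        rw [e1, e2, mul_one]
      · rw [if_neg hs]
        have : ∃ j, (j ∈ suppF h) ≠ (j ∈ u) := by
          by_contra hc
          push_neg at hc
          exact hs (Finset.ext fun j => by
            constructor
            · intro hj; have := hc j; rw [← this]; exact hj
            · intro hj; have := hc j; rw [this]; exact hj)
        obtain ⟨j, hj⟩ := this
        refine Finset.prod_eq_zero (Finset.mem_univ j) ?_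
        by_cases hju : j ∈ u
        · have : h j = 0 := by
            by_contra hc
            exact hj (by simp [mem_suppF.2 hc, hju])
          simp [hgdef, hju, this]
        · have : h j ≠ 0 := by
            intro hc
            exact hj (by simp [hju, mem_suppF, hc])
          simp [hgdef, hju, this]
    rw [Finset.sum_congr rfl (fun u hu => by rw [prodeq u hu])]
    by_cases h0 : h = 0
    · subst h0
      rw [Fe, if_pos rfl]
      refine (Finset.sum_eq_zero fun u hu => ?_).symm
      have : suppF (0 : Fin d → ℤ) = ∅ := suppF_eq_empty.2 rfl
      have hne : suppF (0 : Fin d → ℤ) ≠ u := by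
        rw [this]
        intro hc
        rcases (Finset.mem_filter.1 hu).2 with ⟨x, hx⟩
        rw [← hc] at hx
        exact absurd hx (Finset.notMem_empty x)
      rw [if_neg hne, mul_zero]
    · have hmem : suppF h ∈ F := by
        rw [hF, Finset.mem_filter]
        refine ⟨Finset.mem_univ _, ?_⟩
        rw [Finset.nonempty_iff_ne_empty, Ne, suppF_eq_empty]
        exact h0
      rw [Finset.sum_congr rfl (fun u _ => by rw [mul_ite, mul_zero]),
        Finset.sum_ite_eq F (suppF h)
          (fun u => ENNReal.ofReal (w u) * ∏ j ∈ u, f (h j)), if_pos hmem]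
      rw [Fe, if_neg h0]
  rw [tsum_congr point, Summable.tsum_finsetSum (fun u _ => ENNReal.summable)]
  refine Finset.sum_congr rfl fun u hu => ?_
  rw [ENNReal.tsum_mul_left, aux_tsum_pi d (g u)]
  congr 1
  have e3 : ∀ j, (∑' k : ℤ, g u j k) = if j ∈ u then ENNReal.ofReal (2 * zetaR b) else 1 := by
    intro j
    by_cases hju : j ∈ u
    · rw [if_pos hju]
      rw [← aux_int_sum hb]
      refine tsum_congr fun k => ?_
      simp [hgdef, hju, hfdef]
    · rw [if_neg hju]
      have : ∀ k : ℤ, g u j k = if k = 0 then 1 else 0 := fun k => by simp [hgdef, hju]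
      rw [tsum_congr this]; exact tsum_ite_eq (0 : ℤ) (fun _ => (1 : ℝ≥0∞))
  rw [Finset.prod_congr rfl (fun j _ => e3 j), Finset.prod_ite_mem Finset.univ u
    (fun _ => ENNReal.ofReal (2 * zetaR b)), Finset.univ_inter, Finset.prod_const]

lemma Fe_scale {d : ℕ} {b : ℝ} (hb : 1 ≤ b) (w : Finset (Fin d) → ℝ)
    {p : ℕ} (hp : 2 ≤ p) (m : Fin d → ℤ) :
    Fe d b w (fun j => (p : ℤ) * m j) ≤ ENNReal.ofReal ((p : ℝ) ^ (-b)) * Fe d b w m := by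
  by_cases hm : m = 0
  · subst hm
    have : (fun j : Fin d => (p : ℤ) * (0 : Fin d → ℤ) j) = 0 := by funext j; simp
    rw [this, Fe, if_pos rfl]
    exact zero_le
  · have hp0 : (p : ℤ) ≠ 0 := by positivity
    have hpm : (fun j => (p : ℤ) * m j) ≠ 0 := by
      intro hc
      apply hm
      funext j
      have := congrFun hc j
      simp only [Pi.zero_apply, mul_eq_zero] at this
      rcases this with h | h
      · exact absurd h hp0
      · exact h
    have hsupp : suppF (fun j => (p : ℤ) * m j) = suppF m := by
      ext j
      simp [mem_suppF, hp0]
      omega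
    have habs : ∀ j, |(((p : ℤ) * m j : ℤ) : ℝ)| ^ (-b) =
        (p : ℝ) ^ (-b) * |(m j : ℝ)| ^ (-b) := by
      intro j
      push_cast
      rw [abs_mul, abs_of_nonneg (by positivity : (0:ℝ) ≤ (p:ℝ)),
        Real.mul_rpow (by positivity) (abs_nonneg _)]
    rw [Fe, if_neg hpm, Fe, if_neg hm, hsupp]
    have e1 : ∏ j ∈ suppF m, ENNReal.ofReal (|(((p : ℤ) * m j : ℤ) : ℝ)| ^ (-b))
        = ENNReal.ofReal ((p : ℝ) ^ (-b)) ^ (suppF m).card *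
          ∏ j ∈ suppF m, ENNReal.ofReal (|(m j : ℝ)| ^ (-b)) := by
      rw [← Finset.prod_const, ← Finset.prod_mul_distrib]
      refine Finset.prod_congr rfl fun j _ => ?_
      rw [habs j, ENNReal.ofReal_mul (by positivity)]
    rw [e1]
    have hcard : ∃ n, (suppF m).card = n + 1 := by
      have : (suppF m).card ≠ 0 := by
        rw [Ne, Finset.card_eq_zero, suppF_eq_empty]
        exact hm
      exact Nat.exists_eq_succ_of_ne_zero this
    obtain ⟨n, hn⟩ := hcard
    have hle1 : ENNReal.ofReal ((p : ℝ) ^ (-b)) ≤ 1 := by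
      rw [← ENNReal.ofReal_one]
      refine ENNReal.ofReal_le_ofReal ?_
      exact Real.rpow_le_one_of_one_le_of_nonpos
        (by exact_mod_cast Nat.one_le_iff_ne_zero.2 (by omega)) (by linarith)
    have hpowle : ENNReal.ofReal ((p : ℝ) ^ (-b)) ^ (suppF m).card
        ≤ ENNReal.ofReal ((p : ℝ) ^ (-b)) := by
      rw [hn, pow_succ]
      calc ENNReal.ofReal ((p : ℝ) ^ (-b)) ^ n * ENNReal.ofReal ((p : ℝ) ^ (-b))
          ≤ 1 ^ n * ENNReal.ofReal ((p : ℝ) ^ (-b)) :=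
            mul_le_mul_left (pow_le_pow_left' hle1 n) _
        _ = ENNReal.ofReal ((p : ℝ) ^ (-b)) := by rw [one_pow, one_mul]
    calc ENNReal.ofReal (w (suppF m)) *
          (ENNReal.ofReal ((p : ℝ) ^ (-b)) ^ (suppF m).card *
            ∏ j ∈ suppF m, ENNReal.ofReal (|(m j : ℝ)| ^ (-b)))
        ≤ ENNReal.ofReal (w (suppF m)) *
          (ENNReal.ofReal ((p : ℝ) ^ (-b)) *
            ∏ j ∈ suppF m, ENNReal.ofReal (|(m j : ℝ)| ^ (-b))) := by
          exact mul_le_mul_right (mul_le_mul_left hpowle _) _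
      _ = ENNReal.ofReal ((p : ℝ) ^ (-b)) *
          (ENNReal.ofReal (w (suppF m)) *
            ∏ j ∈ suppF m, ENNReal.ofReal (|(m j : ℝ)| ^ (-b))) := by ring

lemma A_part {d : ℕ} {b : ℝ} (hb : 1 ≤ b) (w : Finset (Fin d) → ℝ)
    {p : ℕ} (hp : 2 ≤ p) :
    ∑' h : Fin d → ℤ, (if ∀ j, (p : ℤ) ∣ h j then Fe d b w h else 0)
      ≤ ENNReal.ofReal ((p : ℝ) ^ (-b)) * ∑' h : Fin d → ℤ, Fe d b w h := by
  classical
  set G : (Fin d → ℤ) → ℝ≥0∞ := fun h => if ∀ j, (p : ℤ) ∣ h j then Fe d b w h else 0 with hG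
  set ι : (Fin d → ℤ) → (Fin d → ℤ) := fun m j => (p : ℤ) * m j with hι
  have hp0 : (p : ℤ) ≠ 0 := by positivity
  have hinj : Function.Injective ι := by
    intro m m' hmm
    funext j
    have := congrFun hmm j
    simp only [hι] at this
    exact mul_left_cancel₀ hp0 this
  have hrange : Function.support G ⊆ Set.range ι := by
    intro h hh
    rw [Function.mem_support, hG] at hh
    by_cases hdvd : ∀ j, (p : ℤ) ∣ h j
    · refine ⟨fun j => h j / p, ?_⟩
      funext j
      exact Int.mul_ediv_cancel' (hdvd j)
    · exact absurd (if_neg hdvd) hh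
  rw [← hinj.tsum_eq hrange]
  have e1 : ∀ m, G (ι m) = Fe d b w (ι m) := by
    intro m
    rw [hG]
    exact if_pos (fun j => Dvd.intro (m j) rfl)
  rw [tsum_congr e1, ← ENNReal.tsum_mul_left]
  exact ENNReal.tsum_le_tsum fun m => Fe_scale hb w hp m


lemma card_genSet (d p : ℕ) : (genSet d p).card = (p - 1) ^ d := by
  rw [genSet, Fintype.card_piFinset]
  have : (Finset.Icc (1 : ℤ) ((p : ℤ) - 1)).card = p - 1 := by
    rw [Int.card_Icc]
    omega
  simp [this]

lemma count_partial {d p : ℕ} (hp : p.Prime) (h : Fin d → ℤ) (j₀ : Fin d)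
    (hj : ¬ (p : ℤ) ∣ h j₀) :
    ((genSet d p).filter (fun z => (p : ℤ) ∣ ∑ j, h j * z j)).card ≤ (p - 1) ^ (d - 1) := by
  classical
  set t : Finset (Fin d → ℤ) :=
    Fintype.piFinset (fun j => if j = j₀ then {(1 : ℤ)} else Finset.Icc (1 : ℤ) ((p : ℤ) - 1))
    with ht
  have hcard : t.card = (p - 1) ^ (d - 1) := by
    rw [ht, Fintype.card_piFinset]
    have e : ∀ j : Fin d, ((if j = j₀ then ({(1 : ℤ)} : Finset ℤ)
        else Finset.Icc (1 : ℤ) ((p : ℤ) - 1)).card) = if j = j₀ then 1 else p - 1 := by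
      intro j
      by_cases hjj : j = j₀
      · simp [hjj]
      · rw [if_neg hjj, if_neg hjj, Int.card_Icc]
        omega
    rw [Finset.prod_congr rfl (fun j _ => e j),
      ← Finset.mul_prod_erase Finset.univ _ (Finset.mem_univ j₀), if_pos rfl, one_mul]
    rw [Finset.prod_congr rfl (fun j hj' => if_neg (Finset.ne_of_mem_erase hj')),
      Finset.prod_const, Finset.card_erase_of_mem (Finset.mem_univ j₀), Finset.card_univ,
      Fintype.card_fin]
  rw [← hcard]
  refine Finset.card_le_card_of_injOn (fun z => Function.update z j₀ 1) ?_ ?_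
  · intro z hz
    rw [Finset.mem_coe, Finset.mem_filter] at hz
    have hz1 := Fintype.mem_piFinset.1 hz.1
    rw [ht, Finset.mem_coe, Fintype.mem_piFinset]
    intro j
    show Function.update z j₀ 1 j ∈ _
    by_cases hjj : j = j₀
    · subst hjj
      rw [Function.update_self, if_pos rfl]
      exact Finset.mem_singleton_self 1
    · rw [Function.update_of_ne hjj, if_neg hjj]
      exact hz1 j
  · intro z hz w hw heq
    simp only [Finset.coe_filter, Set.mem_setOf_eq] at hz hw
    have hzw : ∀ j, j ≠ j₀ → z j = w j := by
      intro j hjj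
      have h2 : Function.update z j₀ 1 j = Function.update w j₀ 1 j := congrFun heq j
      rwa [Function.update_of_ne hjj, Function.update_of_ne hjj] at h2
    have hdvd : (p : ℤ) ∣ h j₀ * (z j₀ - w j₀) := by
      have e : (∑ j, h j * z j) - (∑ j, h j * w j) = h j₀ * (z j₀ - w j₀) := by
        rw [← Finset.sum_sub_distrib]
        rw [Finset.sum_eq_single j₀]
        · ring
        · intro j _ hjj
          rw [hzw j hjj]; ring
        · intro hc; exact absurd (Finset.mem_univ j₀) hc
      rw [← e]
      exact dvd_sub hz.2 hw.2
    have hdvd2 : (p : ℤ) ∣ (z j₀ - w j₀) := by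
      rcases (Int.Prime.dvd_mul' hp hdvd) with hc | hc
      · exact absurd hc hj
      · exact hc
    have hbz := Finset.mem_Icc.1 ((Fintype.mem_piFinset.1 hz.1) j₀)
    have hbw := Finset.mem_Icc.1 ((Fintype.mem_piFinset.1 hw.1) j₀)
    have habs : |z j₀ - w j₀| < (p : ℤ) := by
      rw [abs_lt]
      omega
    have : z j₀ - w j₀ = 0 := Int.eq_zero_of_abs_lt_dvd hdvd2 habs
    have hzj : z j₀ = w j₀ := by omega
    funext j
    by_cases hjj : j = j₀
    · subst hjj; exact hzj
    · exact hzw j hjj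





lemma rKor_pos {d : ℕ} {α : ℝ} {γ : Finset (Fin d) → ℝ}
    (hγ : ∀ u, u.Nonempty → 0 < γ u) (h : Fin d → ℤ) : 0 < rKor d α γ h := by
  rw [rKor]
  split
  · exact one_pos
  · next h0 =>
      have hne : (suppF h).Nonempty := by
        rw [Finset.nonempty_iff_ne_empty, Ne, suppF_eq_empty]; exact h0
      refine mul_pos (inv_pos.2 (hγ _ hne)) (Finset.prod_pos fun j hj => ?_)
      exact Real.rpow_pos_of_pos (abs_pos.2 (by exact_mod_cast mem_suppF.1 hj)) α

lemma rKor_rpow {d : ℕ} {α lam : ℝ} (hlam : 0 < lam) {γ : Finset (Fin d) → ℝ}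
    (hγ : ∀ u, u.Nonempty → 0 < γ u) {h : Fin d → ℤ} (hh : h ≠ 0) :
    (((rKor d α γ h) ^ 2)⁻¹) ^ (1 / (2 * lam)) =
      γ (suppF h) ^ (1 / lam) * ∏ j ∈ suppF h, |(h j : ℝ)| ^ (-(α / lam)) := by
  have hne : (suppF h).Nonempty := by
    rw [Finset.nonempty_iff_ne_empty, Ne, suppF_eq_empty]; exact hh
  set G := γ (suppF h) with hG
  have hGpos : 0 < G := hγ _ hne
  set P := ∏ j ∈ suppF h, |(h j : ℝ)| ^ α with hP
  have habs : ∀ j ∈ suppF h, (0:ℝ) < |(h j : ℝ)| := fun j hj =>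
    abs_pos.2 (by exact_mod_cast mem_suppF.1 hj)
  have hPpos : 0 < P := Finset.prod_pos fun j hj => Real.rpow_pos_of_pos (habs j hj) α
  rw [rKor, if_neg hh, ← hG, ← hP]
  have e1 : (((G⁻¹ * P) ^ 2)⁻¹ : ℝ) = G ^ (2:ℕ) * ((P ^ (2:ℕ))⁻¹) := by
    field_simp
  rw [e1, Real.mul_rpow (by positivity) (by positivity)]
  have e2 : ((G ^ (2:ℕ) : ℝ)) ^ (1 / (2 * lam)) = G ^ (1 / lam) := by
    rw [← Real.rpow_natCast G 2, ← Real.rpow_mul hGpos.le]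
    congr 1
    push_cast
    field_simp
  have e3 : (((P ^ (2:ℕ))⁻¹ : ℝ)) ^ (1 / (2 * lam)) = P ^ (-(1 / lam)) := by
    rw [← Real.rpow_natCast P 2, ← Real.rpow_neg hPpos.le, ← Real.rpow_mul hPpos.le]
    congr 1
    push_cast
    field_simp
  rw [e2, e3]
  congr 1
  rw [hP, ← Real.finset_prod_rpow _ _ (fun j hj => Real.rpow_nonneg (abs_nonneg _) α) _]
  refine Finset.prod_congr rfl fun j hj => ?_
  rw [← Real.rpow_mul (abs_nonneg _)]
  congr 1
  field_simp

/-- average of `E(p,z)^{1/λ}` over all generating vectors. -/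
theorem stmt_10 (p d : ℕ) (hp : p.Prime) (α : ℝ) (hα : 1 / 2 < α)
    (γ : Finset (Fin d) → ℝ)
    (hγ : ∀ u : Finset (Fin d), u.Nonempty → 0 < γ u ∧ γ u ≤ 1)
    (lam : ℝ) (hlam : lam ∈ Set.Ico (1 / 2 : ℝ) α) :
    (((p : ℝ) - 1) ^ d)⁻¹ * ∑ z ∈ genSet d p, Edet d α γ p z ^ (1 / lam) ≤
      2 / ((p : ℝ) - 1) * Vd d (α / lam) (fun u => γ u ^ (1 / lam)) := by
  classical
  have hγpos : ∀ u : Finset (Fin d), u.Nonempty → 0 < γ u := fun u hu => (hγ u hu).1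
  have hlam1 : (1 : ℝ) / 2 ≤ lam := hlam.1
  have hlam2 : lam < α := hlam.2
  have hlam0 : (0 : ℝ) < lam := lt_of_lt_of_le (by norm_num) hlam1
  set b := α / lam with hbdef
  have hb : 1 < b := (one_lt_div hlam0).2 hlam2
  set w : Finset (Fin d) → ℝ := fun u => γ u ^ (1 / lam) with hwdef
  have hwpos : ∀ u : Finset (Fin d), u.Nonempty → 0 ≤ w u := fun u hu =>
    (Real.rpow_pos_of_pos (hγpos u hu) _).le
  have hp2 : 2 ≤ p := hp.two_le
  have hpR : (0 : ℝ) < (p : ℝ) - 1 := by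
    have : (2 : ℝ) ≤ (p : ℝ) := by exact_mod_cast hp2
    linarith
  have hVd0 : 0 ≤ Vd d b w := by
    refine Finset.sum_nonneg fun u hu => ?_
    have hu' : u.Nonempty := (Finset.mem_filter.1 hu).2
    exact mul_nonneg (hwpos u hu') (pow_nonneg (by linarith [zetaR_nonneg (b := b)]) _)
  -- degenerate case d = 0
  rcases Nat.eq_zero_or_pos d with hd0 | hd1
  · subst hd0
    have hV : Vd 0 b w = 0 := by
      rw [Vd]
      refine Finset.sum_eq_zero fun u hu => ?_
      rcases (Finset.mem_filter.1 hu).2 with ⟨x, _⟩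
      exact absurd x.2 (by omega)
    have hE : ∀ z ∈ genSet 0 p, Edet 0 α γ p z ^ (1 / lam) = 0 := by
      intro z _
      haveI : IsEmpty ↥(dualLat 0 p z) :=
        ⟨fun h => h.2.1 (funext fun j => absurd j.2 (by omega))⟩
      rw [Edet, tsum_empty, Real.sqrt_zero, Real.zero_rpow (by positivity)]
    rw [Finset.sum_congr rfl hE, Finset.sum_const, smul_zero, mul_zero, hV, mul_zero]
  -- main case
  set F := Finset.univ.filter (fun u : Finset (Fin d) => u.Nonempty) with hF
  set Z := ENNReal.ofReal (2 * zetaR b) with hZ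
  set VE : ℝ≥0∞ := ∑ u ∈ F, ENNReal.ofReal (w u) * Z ^ u.card with hVE
  have hFe : ∑' h : Fin d → ℤ, Fe d b w h = VE := Fe_tsum d hb w
  have hVEtop : VE ≠ ⊤ := by
    rw [hVE]
    refine (ENNReal.sum_lt_top.2 fun u _ => ?_).ne
    exact ENNReal.mul_lt_top ENNReal.ofReal_lt_top (ENNReal.pow_lt_top ENNReal.ofReal_lt_top)
  set U : (Fin d → ℤ) → ℝ≥0∞ := fun z => ∑' h : dualLat d p z, Fe d b w h.1 with hU
  have hUle : ∀ z, U z ≤ VE := by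
    intro z
    calc U z = ∑' h : Fin d → ℤ, (dualLat d p z).indicator (Fe d b w) h :=
          tsum_subtype (dualLat d p z) (Fe d b w)
      _ ≤ ∑' h : Fin d → ℤ, Fe d b w h :=
          ENNReal.tsum_le_tsum fun h => Set.indicator_le_self _ _ h
      _ = VE := hFe
  have hUtop : ∀ z, U z ≠ ⊤ := fun z => (lt_of_le_of_lt (hUle z) hVEtop.lt_top).ne
  have hθ0 : (0 : ℝ) < 1 / (2 * lam) := by positivity
  have hθ1 : 1 / (2 * lam) ≤ 1 := by
    rw [div_le_one (by linarith)]
    linarith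
  -- Step A : pointwise bound
  have hstep : ∀ z, Edet d α γ p z ^ (1 / lam) ≤ (U z).toReal := by
    intro z
    set T : ℝ≥0∞ := ∑' h : dualLat d p z, ENNReal.ofReal (((rKor d α γ h.1) ^ 2)⁻¹) with hT
    have hrnn : ∀ h : Fin d → ℤ, 0 ≤ ((rKor d α γ h) ^ 2)⁻¹ := fun h =>
      inv_nonneg.2 (sq_nonneg _)
    have hE : Edet d α γ p z = Real.sqrt T.toReal := by
      rw [Edet, hT, ENNReal.tsum_toReal_eq (fun h => ENNReal.ofReal_ne_top)]
      congr 1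
      exact tsum_congr fun h => (ENNReal.toReal_ofReal (hrnn h.1)).symm
    have hrw : Edet d α γ p z ^ (1 / lam) = (T ^ (1 / (2 * lam))).toReal := by
      rw [hE, Real.sqrt_eq_rpow, ← Real.rpow_mul ENNReal.toReal_nonneg,
        ENNReal.toReal_rpow]
      congr 2
      rw [div_mul_div_comm, one_mul]
    rw [hrw]
    refine ENNReal.toReal_mono (hUtop z) ?_
    calc T ^ (1 / (2 * lam))
        ≤ ∑' h : dualLat d p z, (ENNReal.ofReal (((rKor d α γ h.1) ^ 2)⁻¹)) ^ (1 / (2 * lam)) :=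
          aux_tsum_rpow _ hθ0 hθ1
      _ = U z := by
          refine tsum_congr fun h => ?_
          have hpos : 0 < ((rKor d α γ h.1) ^ 2)⁻¹ :=
            inv_pos.2 (pow_pos (rKor_pos hγpos h.1) 2)
          have hne : (suppF h.1).Nonempty := by
            rw [Finset.nonempty_iff_ne_empty, Ne, suppF_eq_empty]; exact h.2.1
          rw [ENNReal.ofReal_rpow_of_pos hpos, rKor_rpow hlam0 hγpos h.2.1, Fe, if_neg h.2.1,
            ENNReal.ofReal_mul (hwpos _ hne),
            ENNReal.ofReal_prod_of_nonneg (fun j _ => Real.rpow_nonneg (abs_nonneg _) _)]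
  -- Step B : core counting bound
  have hcore : ∑ z ∈ genSet d p, U z ≤ 2 * ((p - 1 : ℕ) : ℝ≥0∞) ^ (d - 1) * VE := by
    have e1 : ∀ z : Fin d → ℤ, U z = ∑' h : Fin d → ℤ, (dualLat d p z).indicator (Fe d b w) h :=
      fun z => tsum_subtype (dualLat d p z) (Fe d b w)
    rw [Finset.sum_congr rfl (fun z _ => e1 z), ← Summable.tsum_finsetSum (fun z _ => ENNReal.summable)]
    set AF : (Fin d → ℤ) → ℝ≥0∞ := fun h => if ∀ j, (p : ℤ) ∣ h j then Fe d b w h else 0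
      with hAF
    have hbd : ∀ h : Fin d → ℤ,
        (∑ z ∈ genSet d p, (dualLat d p z).indicator (Fe d b w) h) ≤
          ((p - 1 : ℕ) : ℝ≥0∞) ^ d * AF h + ((p - 1 : ℕ) : ℝ≥0∞) ^ (d - 1) * Fe d b w h := by
      intro h
      have e2 : ∑ z ∈ genSet d p, (dualLat d p z).indicator (Fe d b w) h =
          (((genSet d p).filter (fun z => (p : ℤ) ∣ ∑ j, h j * z j)).card : ℝ≥0∞) *
            Fe d b w h := by
        by_cases h0 : h = 0
        · subst h0
          rw [Fe, if_pos rfl, mul_zero]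
          refine Finset.sum_eq_zero fun z _ => ?_
          have : (0 : Fin d → ℤ) ∉ dualLat d p z := fun hc => hc.1 rfl
          exact Set.indicator_of_notMem this _
        · have : ∀ z ∈ genSet d p, (dualLat d p z).indicator (Fe d b w) h =
              if (p : ℤ) ∣ ∑ j, h j * z j then Fe d b w h else 0 := by
            intro z _
            rw [Set.indicator_apply]
            congr 1
            simp only [dualLat, Set.mem_setOf_eq, eq_iff_iff]
            exact ⟨fun hc => hc.2, fun hc => ⟨h0, hc⟩⟩
          rw [Finset.sum_congr rfl this, ← Finset.sum_filter, Finset.sum_const,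
            nsmul_eq_mul]
      rw [e2]
      by_cases h0 : h = 0
      · subst h0
        rw [Fe, if_pos rfl, mul_zero]
        exact zero_le
      by_cases hdvd : ∀ j, (p : ℤ) ∣ h j
      · have hAFh : AF h = Fe d b w h := if_pos hdvd
        have hcardle : (((genSet d p).filter (fun z => (p : ℤ) ∣ ∑ j, h j * z j)).card : ℝ≥0∞)
            ≤ ((p - 1 : ℕ) : ℝ≥0∞) ^ d := by
          rw [← Nat.cast_pow, Nat.cast_le, ← card_genSet d p]
          exact Finset.card_filter_le _ _
        calc (((genSet d p).filter (fun z => (p : ℤ) ∣ ∑ j, h j * z j)).card : ℝ≥0∞) *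
              Fe d b w h ≤ ((p - 1 : ℕ) : ℝ≥0∞) ^ d * Fe d b w h :=
              mul_le_mul_left hcardle _
          _ = ((p - 1 : ℕ) : ℝ≥0∞) ^ d * AF h := by rw [hAFh]
          _ ≤ _ := le_add_of_nonneg_right (zero_le)
      · push_neg at hdvd
        obtain ⟨j₀, hj₀⟩ := hdvd
        have hAFh : AF h = 0 := if_neg (by push_neg; exact ⟨j₀, hj₀⟩)
        have hcardle : (((genSet d p).filter (fun z => (p : ℤ) ∣ ∑ j, h j * z j)).card : ℝ≥0∞)
            ≤ ((p - 1 : ℕ) : ℝ≥0∞) ^ (d - 1) := by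
          rw [← Nat.cast_pow, Nat.cast_le]
          exact count_partial hp h j₀ hj₀
        calc (((genSet d p).filter (fun z => (p : ℤ) ∣ ∑ j, h j * z j)).card : ℝ≥0∞) *
              Fe d b w h ≤ ((p - 1 : ℕ) : ℝ≥0∞) ^ (d - 1) * Fe d b w h :=
              mul_le_mul_left hcardle _
          _ ≤ _ := le_add_of_nonneg_left (zero_le)
    calc ∑' h : Fin d → ℤ, ∑ z ∈ genSet d p, (dualLat d p z).indicator (Fe d b w) h
        ≤ ∑' h : Fin d → ℤ,
            (((p - 1 : ℕ) : ℝ≥0∞) ^ d * AF h + ((p - 1 : ℕ) : ℝ≥0∞) ^ (d - 1) * Fe d b w h) :=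
          ENNReal.tsum_le_tsum hbd
      _ = ((p - 1 : ℕ) : ℝ≥0∞) ^ d * ∑' h, AF h +
          ((p - 1 : ℕ) : ℝ≥0∞) ^ (d - 1) * ∑' h, Fe d b w h := by
          rw [ENNReal.tsum_add, ENNReal.tsum_mul_left, ENNReal.tsum_mul_left]
      _ ≤ ((p - 1 : ℕ) : ℝ≥0∞) ^ d * (ENNReal.ofReal ((p : ℝ) ^ (-b)) * VE) +
          ((p - 1 : ℕ) : ℝ≥0∞) ^ (d - 1) * VE := by
          refine add_le_add (mul_le_mul_right ?_ _) (le_of_eq (by rw [hFe]))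
          rw [← hFe]
          exact A_part hb.le w hp2
      _ ≤ ((p - 1 : ℕ) : ℝ≥0∞) ^ (d - 1) * VE + ((p - 1 : ℕ) : ℝ≥0∞) ^ (d - 1) * VE := by
          refine add_le_add ?_ le_rfl
          have epow : ((p - 1 : ℕ) : ℝ≥0∞) ^ d =
              ((p - 1 : ℕ) : ℝ≥0∞) ^ (d - 1) * ((p - 1 : ℕ) : ℝ≥0∞) := by
            rw [← pow_succ]
            congr 1
            omega
          have hone : ((p - 1 : ℕ) : ℝ≥0∞) * ENNReal.ofReal ((p : ℝ) ^ (-b)) ≤ 1 := by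
            rw [← ENNReal.ofReal_natCast (p - 1), ← ENNReal.ofReal_mul (by positivity),
              ← ENNReal.ofReal_one]
            refine ENNReal.ofReal_le_ofReal ?_
            have hc : ((p - 1 : ℕ) : ℝ) = (p : ℝ) - 1 := by
              push_cast [Nat.cast_sub (by omega : 1 ≤ p)]
              ring
            have h1p : (1 : ℝ) ≤ (p : ℝ) := by exact_mod_cast (by omega : 1 ≤ p)
            have hple : (p : ℝ) ^ (-b) ≤ (p : ℝ) ^ (-1 : ℝ) :=
              Real.rpow_le_rpow_of_exponent_le h1p (by linarith)
            have hp0 : (0 : ℝ) < (p : ℝ) := by positivity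
            calc ((p - 1 : ℕ) : ℝ) * (p : ℝ) ^ (-b)
                ≤ ((p : ℝ) - 1) * (p : ℝ) ^ (-1 : ℝ) := by
                  rw [hc]
                  exact mul_le_mul_of_nonneg_left hple (by linarith)
              _ = ((p : ℝ) - 1) / (p : ℝ) := by
                  rw [Real.rpow_neg_one]
                  ring
              _ ≤ 1 := by
                  rw [div_le_one hp0]
                  linarith
          calc ((p - 1 : ℕ) : ℝ≥0∞) ^ d * (ENNReal.ofReal ((p : ℝ) ^ (-b)) * VE)
              = ((p - 1 : ℕ) : ℝ≥0∞) ^ (d - 1) *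
                  (((p - 1 : ℕ) : ℝ≥0∞) * ENNReal.ofReal ((p : ℝ) ^ (-b))) * VE := by
                rw [epow]; ring
            _ ≤ ((p - 1 : ℕ) : ℝ≥0∞) ^ (d - 1) * 1 * VE := by
                exact mul_le_mul_left (mul_le_mul_right hone _) _
            _ = ((p - 1 : ℕ) : ℝ≥0∞) ^ (d - 1) * VE := by rw [mul_one]
      _ = 2 * ((p - 1 : ℕ) : ℝ≥0∞) ^ (d - 1) * VE := by ring
  -- Step C : VE = ofReal (Vd d b w)
  have hVEeq : VE = ENNReal.ofReal (Vd d b w) := by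
    rw [hVE, Vd, ENNReal.ofReal_sum_of_nonneg]
    · refine Finset.sum_congr rfl fun u hu => ?_
      have hu' : u.Nonempty := (Finset.mem_filter.1 hu).2
      rw [ENNReal.ofReal_mul (hwpos u hu'), ENNReal.ofReal_pow (by linarith [zetaR_nonneg (b := b)])]
    · intro u hu
      have hu' : u.Nonempty := (Finset.mem_filter.1 hu).2
      exact mul_nonneg (hwpos u hu') (pow_nonneg (by linarith [zetaR_nonneg (b := b)]) _)
  -- Final assembly
  have hsum : ∑ z ∈ genSet d p, Edet d α γ p z ^ (1 / lam)
      ≤ 2 * ((p : ℝ) - 1) ^ (d - 1) * Vd d b w := by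
    have hc : ((p - 1 : ℕ) : ℝ) = (p : ℝ) - 1 := by
      push_cast [Nat.cast_sub (by omega : 1 ≤ p)]
      ring
    calc ∑ z ∈ genSet d p, Edet d α γ p z ^ (1 / lam)
        ≤ ∑ z ∈ genSet d p, (U z).toReal := Finset.sum_le_sum fun z _ => hstep z
      _ = (∑ z ∈ genSet d p, U z).toReal := (ENNReal.toReal_sum fun z _ => hUtop z).symm
      _ ≤ (2 * ((p - 1 : ℕ) : ℝ≥0∞) ^ (d - 1) * VE).toReal := by
          refine ENNReal.toReal_mono ?_ hcore
          exact ENNReal.mul_ne_top (ENNReal.mul_ne_top (by simp)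
            (by simp [ENNReal.pow_ne_top, ENNReal.natCast_ne_top])) hVEtop
      _ = 2 * ((p : ℝ) - 1) ^ (d - 1) * Vd d b w := by
          rw [hVEeq, ENNReal.toReal_mul, ENNReal.toReal_mul, ENNReal.toReal_pow,
            ENNReal.toReal_ofReal hVd0, ENNReal.toReal_natCast, ENNReal.toReal_ofNat, hc]
  have hinv : (0 : ℝ) ≤ (((p : ℝ) - 1) ^ d)⁻¹ := by positivity
  calc (((p : ℝ) - 1) ^ d)⁻¹ * ∑ z ∈ genSet d p, Edet d α γ p z ^ (1 / lam)
      ≤ (((p : ℝ) - 1) ^ d)⁻¹ * (2 * ((p : ℝ) - 1) ^ (d - 1) * Vd d b w) :=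
        mul_le_mul_of_nonneg_left hsum hinv
    _ = 2 / ((p : ℝ) - 1) * Vd d b w := by
        have epow : ((p : ℝ) - 1) ^ d = ((p : ℝ) - 1) ^ (d - 1) * ((p : ℝ) - 1) := by
          rw [← pow_succ]
          congr 1
          omega
        rw [epow, mul_inv]
        have hne1 : ((p : ℝ) - 1) ^ (d - 1) ≠ 0 := by positivity
        have hne2 : ((p : ℝ) - 1) ≠ 0 := ne_of_gt hpR
        field_simp

end
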